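/- Let S be a finite set, ψ: S → Γ a function to an abelian group Γ, and F ⊆ Γ a finite set of labels with 0 ∉ F and |F| ≤ |S| - 1. Then there exists a nonempty subset S' ⊆ S such that the sum of ψ over S' is not in F. -/

import Mathlib

/-- For a finite set `S`, a labeling `ψ : S → Γ` to an abelian group, and a
finite set `F ⊆ Γ` of labels with `0 ∉ F` and `|F| ≤ |S| - 1`, there is a nonempty
subset `S' ⊆ S` with `ψ(S') ∉ F`. -/
theorem stmt_0 {α Γ : Type*} [AddCommGroup Γ]
    (S : Finset α) (hS : S.Nonempty) (ψ : α → Γ)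
    (F : Finset Γ) (h0 : (0 : Γ) ∉ F) (hF : F.card ≤ S.card - 1) :
    ∃ S' : Finset α, S' ⊆ S ∧ S'.Nonempty ∧ (∑ x ∈ S', ψ x) ∉ F := by
  classical
  by_contra hcon
  push_neg at hcon
  set n := S.card with hn
  have hn1 : 1 ≤ n := Finset.card_pos.mpr hS
  have hnodup : S.toList.Nodup := S.nodup_toList
  have hlen : S.toList.length = n := S.length_toList
  set A : Fin n → Finset α := fun i => (S.toList.take (i + 1)).toFinset with hA
  have hcard : ∀ i : Fin n, (A i).card = i + 1 := by
    intro i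
    rw [hA]
    rw [List.toFinset_card_of_nodup (hnodup.sublist (List.take_sublist _ _)),
      List.length_take]
    omega
  have hsub : ∀ i : Fin n, A i ⊆ S := by
    intro i x hx
    simp only [hA, List.mem_toFinset] at hx
    exact Finset.mem_toList.mp (List.mem_of_mem_take hx)
  have hne : ∀ i : Fin n, (A i).Nonempty := by
    intro i
    rw [← Finset.card_pos, hcard]
    omega
  have hmono : ∀ i j : Fin n, i ≤ j → A i ⊆ A j := by
    intro i j hij x hx
    simp only [hA, List.mem_toFinset] at hx ⊢
    exact (List.take_prefix_take_left (by omega : (i:ℕ)+1 ≤ (j:ℕ)+1)).subset hx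
  set f : Fin n → Γ := fun i => ∑ x ∈ A i, ψ x with hf
  have hmem : ∀ i : Fin n, f i ∈ F := fun i => hcon _ (hsub i) (hne i)
  have hinj : Function.Injective f := by
    have key : ∀ i j : Fin n, i < j → f i ≠ f j := by
      intro i j hij heq
      have hsub' : A i ⊆ A j := hmono i j (le_of_lt hij)
      have hsum : ∑ x ∈ A j \ A i, ψ x + ∑ x ∈ A i, ψ x = ∑ x ∈ A j, ψ x :=
        Finset.sum_sdiff hsub'
      have hzero : ∑ x ∈ A j \ A i, ψ x = 0 := by
        have h1 : ∑ x ∈ A j \ A i, ψ x = f j - f i := eq_sub_of_add_eq hsum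
        rw [h1, heq, sub_self]
      have hne' : (A j \ A i).Nonempty := by
        rw [← Finset.card_pos, Finset.card_sdiff_of_subset hsub', hcard, hcard]
        omega
      have := hcon _ ((Finset.sdiff_subset).trans (hsub j)) hne'
      rw [hzero] at this
      exact h0 this
    intro i j heq
    rcases lt_trichotomy i j with h | h | h
    · exact absurd heq (key i j h)
    · exact h
    · exact absurd heq.symm (key j i h)
  have := Finset.card_le_card_of_injOn (s := Finset.univ) f (fun i _ => hmem i) hinj.injOn
  rw [Finset.card_univ, Fintype.card_fin] at this
  omega
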